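/- Let π: (Q,n,k) → (R,m,k) be a surjection of Noetherian local rings with ker π ⊆ n². Let M be a finitely generated Q-module having a linear resolution over Q, let N be a finitely generated R-module, and let φ: M → N be a homomorphism of Q-modules such that the induced map M/nM → N/mN is injective. Then for every i ≥ 0 the induced map Tor_i^Q(M,k) → Tor_i^R(N,k) is injective. -/

import Mathlib

open IsLocalRing

universe u v

/-- `d`, `ε` form a minimal free resolution of the `R`-module `M`,
with `i`-th Betti number `b i`. -/
def IsMinFreeRes (R : Type u) [CommRing R] [IsLocalRing R]
    (M : Type v) [AddCommGroup M] [Module R M] (b : ℕ → ℕ)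
    (d : ∀ i : ℕ, ((Fin (b (i+1)) → R) →ₗ[R] (Fin (b i) → R)))
    (ε : (Fin (b 0) → R) →ₗ[R] M) : Prop :=
  Function.Surjective ε ∧ Function.Exact (d 0) ε ∧
  (∀ i, Function.Exact (d (i+1)) (d i)) ∧
  (∀ i, LinearMap.range (d i) ≤ (maximalIdeal R) • (⊤ : Submodule R (Fin (b i) → R)))

/-- `b` is the sequence of Betti numbers of the `R`-module `M`. -/
def HasBettiSeq (R : Type u) [CommRing R] [IsLocalRing R]
    (M : Type v) [AddCommGroup M] [Module R M] (b : ℕ → ℕ) : Prop :=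
  ∃ d ε, IsMinFreeRes R M b d ε

/-- The depth of a module: the supremum of lengths of `M`-regular sequences
contained in the maximal ideal. -/
noncomputable def mdepth (R : Type u) [CommRing R] [IsLocalRing R]
    (M : Type v) [AddCommGroup M] [Module R M] : ℕ∞ :=
  sSup {n : ℕ∞ | ∃ rs : List R, (rs.length : ℕ∞) = n ∧ (∀ r ∈ rs, r ∈ maximalIdeal R) ∧
    RingTheory.Sequence.IsRegular M rs}

/-- The (Krull) dimension of a module. -/
noncomputable def mdim (R : Type u) [CommRing R]
    (M : Type v) [AddCommGroup M] [Module R M] : WithBot ℕ∞ :=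
  ringKrullDim (R ⧸ Module.annihilator R M)

/-- The length of a module. -/
noncomputable def mlength (R : Type u) [CommRing R]
    (M : Type v) [AddCommGroup M] [Module R M] : ℕ∞ :=
  sSup {n : ℕ∞ | ∃ c : RelSeries {p : Submodule R M × Submodule R M | p.1 < p.2}, (c.length : ℕ∞) = n}

/-- The minimal number of generators of a module. -/
noncomputable def mu (R : Type u) [CommRing R]
    (M : Type v) [AddCommGroup M] [Module R M] : ℕ :=
  sInf {n | ∃ s : Fin n → M, Submodule.span R (Set.range s) = ⊤}

/-- A Cohen--Macaulay local ring: Noetherian local with `depth = dim`. -/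
def IsCMLocalRing (R : Type u) [CommRing R] [IsLocalRing R] : Prop :=
  IsNoetherianRing R ∧ (mdepth R R : WithBot ℕ∞) = ringKrullDim R

/-- A Cohen--Macaulay module of dimension `d`. -/
def IsCMModOfDim (R : Type u) [CommRing R] [IsLocalRing R]
    (M : Type v) [AddCommGroup M] [Module R M] (d : ℕ) : Prop :=
  Module.Finite R M ∧ mdepth R M = (d : ℕ∞) ∧ mdim R M = (d : WithBot ℕ∞)

/-- A maximal Cohen--Macaulay module. -/
def IsMCMMod (R : Type u) [CommRing R] [IsLocalRing R]
    (M : Type v) [AddCommGroup M] [Module R M] : Prop :=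
  Module.Finite R M ∧ (mdepth R M : WithBot ℕ∞) = ringKrullDim R

/-- `M` has finite injective dimension over `R`. -/
def HasFiniteInjDim (R : Type u) [CommRing R]
    (M : Type v) [AddCommGroup M] [Module R M] : Prop :=
  ∃ (n : ℕ) (I : ℕ → ModuleCat.{v} R) (d : ∀ i, I i →ₗ[R] I (i+1)) (ε : M →ₗ[R] I 0),
    Function.Injective ε ∧ (∀ i, Module.Injective R (I i)) ∧
    Function.Exact ε (d 0) ∧ (∀ i, Function.Exact (d i) (d (i+1))) ∧
    (∀ i, n < i → Subsingleton (I i))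

/-- `ω` is a canonical module of the local ring `R`: a maximal Cohen--Macaulay module
of finite injective dimension such that the natural map `R → Hom_R(ω, ω)` is an
isomorphism. -/
def IsCanonicalModule (R : Type u) [CommRing R] [IsLocalRing R]
    (ω : Type v) [AddCommGroup ω] [Module R ω] : Prop :=
  IsMCMMod R ω ∧ HasFiniteInjDim R ω ∧
    Function.Bijective (algebraMap R (Module.End R ω))

/-- A Gorenstein local ring: Noetherian, of finite injective dimension over itself. -/
def IsGorensteinLocalRing (R : Type u) [CommRing R] [IsLocalRing R] : Prop :=
  IsNoetherianRing R ∧ HasFiniteInjDim R R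

/-- A sequence of natural numbers grows exponentially. -/
def ExpGrowth (b : ℕ → ℕ) : Prop :=
  ∃ α β : ℝ, 1 < α ∧ α < β ∧ ∀ᶠ n in Filter.atTop, α ^ n < (b n : ℝ) ∧ (b n : ℝ) < β ^ n

/-- A sequence of natural numbers is eventually strictly increasing. -/
def EvStrictIncr (b : ℕ → ℕ) : Prop := ∃ N, ∀ n, N ≤ n → b n < b (n+1)

/-- `M` has a linear (minimal free) resolution: the induced maps
`F_i/mF_i → mF_{i-1}/m²F_{i-1}` are injective. -/
def HasLinearRes (R : Type u) [CommRing R] [IsLocalRing R]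
    (M : Type v) [AddCommGroup M] [Module R M] : Prop :=
  ∃ b d ε, IsMinFreeRes R M b d ε ∧
    ∀ (i : ℕ) (v : Fin (b (i+1)) → R),
      d i v ∈ ((maximalIdeal R)^2 • (⊤ : Submodule R (Fin (b i) → R))) →
        v ∈ (maximalIdeal R • (⊤ : Submodule R (Fin (b (i+1)) → R)))



namespace TorAux

lemma mem_smul_top_pi {R : Type*} [CommRing R] (I : Ideal R) {n : ℕ} (x : Fin n → R) :
    x ∈ I • (⊤ : Submodule R (Fin n → R)) ↔ ∀ j, x j ∈ I := by
  constructor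
  · intro hx j
    refine Submodule.smul_induction_on hx (fun r hr m _ => ?_) (fun a b ha hb => ?_)
    · exact I.mul_mem_right _ hr
    · exact I.add_mem ha hb
  · intro hx
    have hxx : x = ∑ j, x j • (Pi.single j (1 : R) : Fin n → R) := by
      funext t
      rw [Finset.sum_apply]
      simp [Pi.single_apply, mul_ite]
    rw [hxx]
    exact Submodule.sum_mem _ fun j _ => Submodule.smul_mem_smul (hx j) trivial

lemma mem_smul_top_of_mem {R : Type*} [CommRing R] {A B : Type*} [AddCommGroup A] [Module R A]
    [AddCommGroup B] [Module R B] (f : A →ₗ[R] B) (I : Ideal R) {x : A}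
    (hx : x ∈ I • (⊤ : Submodule R A)) : f x ∈ I • (⊤ : Submodule R B) := by
  have := Submodule.map_smul'' I (⊤ : Submodule R A) f
  have hm : f x ∈ (I • (⊤ : Submodule R A)).map f := Submodule.mem_map_of_mem hx
  rw [this] at hm
  exact Submodule.smul_mono le_rfl le_top hm

lemma sq_smul_top {R : Type*} [CommRing R] {A : Type*} [AddCommGroup A] [Module R A]
    (I : Ideal R) : (I ^ 2) • (⊤ : Submodule R A) = I • (I • (⊤ : Submodule R A)) := by
  rw [pow_two, ← Ideal.smul_eq_mul, Submodule.smul_assoc]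

end TorAux

open IsLocalRing Submodule TensorProduct in
lemma TorAux.exists_left_inverse {R : Type*} [CommRing R] [IsLocalRing R] {a b : ℕ}
    (f : (Fin a → R) →ₗ[R] (Fin b → R))
    (hf : ∀ v, f v ∈ maximalIdeal R • (⊤ : Submodule R (Fin b → R)) →
      v ∈ maximalIdeal R • (⊤ : Submodule R (Fin a → R))) :
    ∃ g : (Fin b → R) →ₗ[R] (Fin a → R), g ∘ₗ f = LinearMap.id := by
  set m := maximalIdeal R
  have hle : m • (⊤ : Submodule R (Fin a → R)) ≤ (m • (⊤ : Submodule R (Fin b → R))).comap f :=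
    fun x hx => TorAux.mem_smul_top_of_mem f m hx
  set q := Submodule.mapQ (m • (⊤ : Submodule R (Fin a → R)))
    (m • (⊤ : Submodule R (Fin b → R))) f hle with hq
  have hqinj : Function.Injective q := by
    rw [← LinearMap.ker_eq_bot, eq_bot_iff]
    rintro x hx
    obtain ⟨v, rfl⟩ := Submodule.Quotient.mk_surjective _ x
    rw [LinearMap.mem_ker, hq, Submodule.mapQ_apply] at hx
    have : f v ∈ m • (⊤ : Submodule R (Fin b → R)) := (Submodule.Quotient.mk_eq_zero _).mp hx
    exact (Submodule.mem_bot _).mpr ((Submodule.Quotient.mk_eq_zero _).mpr (hf v this))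
  have hnat : ∀ x : (ResidueField R) ⊗[R] (Fin a → R),
      (quotTensorEquivQuotSMul (Fin b → R) m) (f.lTensor (ResidueField R) x) =
        q ((quotTensorEquivQuotSMul (Fin a → R) m) x) := by
    intro x
    induction x using TensorProduct.induction_on with
    | zero => simp only [LinearMap.map_zero, LinearEquiv.map_zero]; exact ((quotTensorEquivQuotSMul (Fin b → R) m).map_zero).trans (((congrArg q ((quotTensorEquivQuotSMul (Fin a → R) m).map_zero)).trans (map_zero q)).symm)
    | tmul c v =>
        obtain ⟨r, rfl⟩ := Ideal.Quotient.mk_surjective c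
        show (quotTensorEquivQuotSMul (Fin b → R) m) ((Ideal.Quotient.mk m r) ⊗ₜ[R] f v) =
          q ((quotTensorEquivQuotSMul (Fin a → R) m) ((Ideal.Quotient.mk m r) ⊗ₜ[R] v))
        rw [quotTensorEquivQuotSMul_mk_tmul, quotTensorEquivQuotSMul_mk_tmul, hq,
          Submodule.mapQ_apply, map_smul]
    | add x y hx hy => simp only [map_add, hx, hy]; exact ((quotTensorEquivQuotSMul (Fin b → R) m).map_add _ _).trans ((congrArg₂ (· + ·) hx hy).trans ((map_add q _ _).symm.trans (congrArg q ((quotTensorEquivQuotSMul (Fin a → R) m).map_add x y).symm)))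
  have hinj : Function.Injective (f.lTensor (ResidueField R)) := by
    intro x y hxy
    have h2 : q ((quotTensorEquivQuotSMul (Fin a → R) m) x) =
        q ((quotTensorEquivQuotSMul (Fin a → R) m) y) := by rw [← hnat, ← hnat, hxy]
    exact (quotTensorEquivQuotSMul (Fin a → R) m).injective (hqinj h2)
  exact (IsLocalRing.split_injective_iff_lTensor_residueField_injective f).mpr hinj

open IsLocalRing in
lemma TorAux.split_mem {R : Type*} [CommRing R] [IsLocalRing R] {a b : ℕ}
    (f : (Fin a → R) →ₗ[R] (Fin b → R))
    (hf : ∀ v, f v ∈ maximalIdeal R • (⊤ : Submodule R (Fin b → R)) →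
      v ∈ maximalIdeal R • (⊤ : Submodule R (Fin a → R)))
    (I : Ideal R) (v : Fin a → R)
    (hv : f v ∈ I • (⊤ : Submodule R (Fin b → R))) :
    v ∈ I • (⊤ : Submodule R (Fin a → R)) := by
  obtain ⟨g, hg⟩ := TorAux.exists_left_inverse f hf
  have hgf : g (f v) = v := LinearMap.congr_fun hg v
  rw [← hgf]
  exact TorAux.mem_smul_top_of_mem g I hv

open IsLocalRing in
lemma TorAux.pi_mem_max {Q R : Type*} [CommRing Q] [IsLocalRing Q] [CommRing R] [IsLocalRing R]
    (π : Q →+* R) (hsurj : Function.Surjective π)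
    (hker : RingHom.ker π ≤ (maximalIdeal Q) ^ 2) :
    ∀ q : Q, π q ∈ maximalIdeal R ↔ q ∈ maximalIdeal Q := by
  intro q
  constructor
  · intro h
    by_contra hq
    have hu : IsUnit q := not_not.mp (fun hn => hq hn)
    exact h (hu.map π)
  · intro h
    by_contra hπ
    have hu : IsUnit (π q) := not_not.mp (fun hn => hπ hn)
    obtain ⟨u, hu'⟩ := hu.exists_right_inv
    obtain ⟨p, rfl⟩ := hsurj u
    have : q * p - 1 ∈ RingHom.ker π := by
      simp [RingHom.mem_ker, map_sub, map_mul, hu']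
    have ht : q * p - 1 ∈ maximalIdeal Q := Ideal.pow_le_self two_ne_zero (hker this)
    have : IsUnit (q * p) := by
      by_contra hqp
      have : q * p ∈ maximalIdeal Q := hqp
      have h1 : (1 : Q) ∈ maximalIdeal Q := by
        have := Submodule.sub_mem _ this ht
        simpa using this
      exact (maximalIdeal Q).ne_top_iff_one.mp (IsLocalRing.maximalIdeal.isMaximal Q).ne_top h1
    exact h (isUnit_of_mul_isUnit_left this)

open IsLocalRing in
lemma TorAux.map_max {Q R : Type*} [CommRing Q] [IsLocalRing Q] [CommRing R] [IsLocalRing R]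
    (π : Q →+* R) (hsurj : Function.Surjective π)
    (hker : RingHom.ker π ≤ (maximalIdeal Q) ^ 2) :
    Ideal.map π (maximalIdeal Q) = maximalIdeal R := by
  apply le_antisymm
  · rw [Ideal.map_le_iff_le_comap]
    intro q hq
    exact (TorAux.pi_mem_max π hsurj hker q).mpr hq
  · intro x hx
    obtain ⟨q, rfl⟩ := hsurj x
    exact Ideal.mem_map_of_mem π ((TorAux.pi_mem_max π hsurj hker q).mp hx)

open IsLocalRing in
lemma TorAux.pi_mem_sq {Q R : Type*} [CommRing Q] [IsLocalRing Q] [CommRing R] [IsLocalRing R]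
    (π : Q →+* R) (hsurj : Function.Surjective π)
    (hker : RingHom.ker π ≤ (maximalIdeal Q) ^ 2) :
    ∀ q : Q, π q ∈ (maximalIdeal R) ^ 2 → q ∈ (maximalIdeal Q) ^ 2 := by
  intro q hq
  rw [← TorAux.map_max π hsurj hker, ← Ideal.map_pow] at hq
  obtain ⟨y, hy, hyq⟩ := (Ideal.mem_map_iff_of_surjective π hsurj).mp hq
  have : q - y ∈ RingHom.ker π := by simp [RingHom.mem_ker, map_sub, hyq]
  have h2 : q - y ∈ (maximalIdeal Q) ^ 2 := hker this
  have := Ideal.add_mem _ h2 hy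
  simpa using this

lemma TorAux.lift_of_range {Q : Type*} [CommRing Q] {A B C : Type*}
    [AddCommGroup A] [Module Q A] [Module.Projective Q A]
    [AddCommGroup B] [Module Q B] [AddCommGroup C] [Module Q C]
    (f : A →ₗ[Q] C) (g : B →ₗ[Q] C) (h : ∀ v, f v ∈ LinearMap.range g) :
    ∃ h' : A →ₗ[Q] B, g ∘ₗ h' = f := by
  obtain ⟨h', hh⟩ := Module.projective_lifting_property g.rangeRestrict
    (f.codRestrict (LinearMap.range g) h) g.surjective_rangeRestrict
  refine ⟨h', ?_⟩
  ext v
  exact congrArg Subtype.val (LinearMap.congr_fun hh v)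

section Chain

open IsLocalRing

variable {Q : Type u} [CommRing Q] [IsLocalRing Q]
  {M : Type u} [AddCommGroup M] [Module Q M]
  {b1 : ℕ → ℕ} {d1 : ∀ i : ℕ, ((Fin (b1 (i+1)) → Q) →ₗ[Q] (Fin (b1 i) → Q))}
  {ε1 : (Fin (b1 0) → Q) →ₗ[Q] M}
  {b2 : ℕ → ℕ} {d2 : ∀ i : ℕ, ((Fin (b2 (i+1)) → Q) →ₗ[Q] (Fin (b2 i) → Q))}
  {ε2 : (Fin (b2 0) → Q) →ₗ[Q] M}

lemma TorAux.eps_range (h2 : IsMinFreeRes Q M b2 d2 ε2) (v : Fin (b1 0) → Q) :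
    ε1 v ∈ LinearMap.range ε2 := by
  rw [LinearMap.range_eq_top.mpr h2.1]; trivial

variable (h1 : IsMinFreeRes Q M b1 d1 ε1) (h2 : IsMinFreeRes Q M b2 d2 ε2)

/-- Comparison chain map between two resolutions, lifting the identity of `M`. -/
noncomputable def TorAux.chainAux :
    ∀ i : ℕ, Σ' g : (Fin (b1 i) → Q) →ₗ[Q] (Fin (b2 i) → Q),
      ∀ v, g (d1 i v) ∈ LinearMap.range (d2 i)
  | 0 =>
      ⟨(TorAux.lift_of_range ε1 ε2 (TorAux.eps_range h2)).choose, by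
        intro v
        have hc := (TorAux.lift_of_range ε1 ε2 (TorAux.eps_range (ε1 := ε1) h2)).choose_spec
        have h3 : ε2 ((TorAux.lift_of_range ε1 ε2 (TorAux.eps_range h2)).choose (d1 0 v)) =
            ε1 (d1 0 v) := LinearMap.congr_fun hc (d1 0 v)
        have hz : ε1 (d1 0 v) = 0 := (h1.2.1 (d1 0 v)).mpr ⟨v, rfl⟩
        exact (h2.2.1 _).mp (h3.trans hz)⟩
  | (i+1) =>
      ⟨(TorAux.lift_of_range ((TorAux.chainAux i).1 ∘ₗ d1 i) (d2 i)
          (TorAux.chainAux i).2).choose, by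
        intro v
        have hc := (TorAux.lift_of_range ((TorAux.chainAux i).1 ∘ₗ d1 i) (d2 i)
          (TorAux.chainAux i).2).choose_spec
        have heq := LinearMap.congr_fun hc (d1 (i+1) v)
        have hz : d1 i (d1 (i+1) v) = 0 := (h1.2.2.1 i (d1 (i+1) v)).mpr ⟨v, rfl⟩
        rw [LinearMap.comp_apply, LinearMap.comp_apply, hz, map_zero] at heq
        exact (h2.2.2.1 i _).mp heq⟩

lemma TorAux.chainAux_zero_spec :
    ε2 ∘ₗ (TorAux.chainAux h1 h2 0).1 = ε1 :=
  (TorAux.lift_of_range ε1 ε2 (TorAux.eps_range h2)).choose_spec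

lemma TorAux.chainAux_succ_spec (i : ℕ) :
    d2 i ∘ₗ (TorAux.chainAux h1 h2 (i+1)).1 = (TorAux.chainAux h1 h2 i).1 ∘ₗ d1 i :=
  (TorAux.lift_of_range ((TorAux.chainAux h1 h2 i).1 ∘ₗ d1 i) (d2 i)
    (TorAux.chainAux h1 h2 i).2).choose_spec

end Chain

section Homotopy

open IsLocalRing

variable {Q : Type u} [CommRing Q] [IsLocalRing Q]
  {M : Type u} [AddCommGroup M] [Module Q M]
  {bF : ℕ → ℕ} {dF : ∀ i : ℕ, ((Fin (bF (i+1)) → Q) →ₗ[Q] (Fin (bF i) → Q))}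
  {εF : (Fin (bF 0) → Q) →ₗ[Q] M}

/-- A chain self-map of a minimal free resolution lifting the identity is congruent to
the identity modulo the maximal ideal (via a homotopy). -/
lemma TorAux.sub_id_mem (hF : IsMinFreeRes Q M bF dF εF)
    (γ : ∀ i : ℕ, (Fin (bF i) → Q) →ₗ[Q] (Fin (bF i) → Q))
    (hγ0 : εF ∘ₗ γ 0 = εF)
    (hγ : ∀ i, dF i ∘ₗ γ (i+1) = γ i ∘ₗ dF i) :
    ∀ i v, γ i v - v ∈ maximalIdeal Q • (⊤ : Submodule Q (Fin (bF i) → Q)) := by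
  set m := maximalIdeal Q
  suffices H : ∀ i, (∃ s : (Fin (bF i) → Q) →ₗ[Q] (Fin (bF (i+1)) → Q),
      ∀ w : Fin (bF (i+1)) → Q, dF i (s (dF i w)) = γ i (dF i w) - dF i w) ∧
      (∀ v, γ i v - v ∈ m • (⊤ : Submodule Q (Fin (bF i) → Q))) by
    exact fun i => (H i).2
  intro i
  induction i with
  | zero =>
      have hrange : ∀ v, γ 0 v - v ∈ LinearMap.range (dF 0) := by
        intro v
        have hz : εF (γ 0 v - v) = 0 := by
          rw [map_sub, show εF (γ 0 v) = εF v from LinearMap.congr_fun hγ0 v, sub_self]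
        exact (hF.2.1 _).mp hz
      obtain ⟨s, hs⟩ := TorAux.lift_of_range (γ 0 - LinearMap.id) (dF 0)
        (fun v => by simpa using hrange v)
      have hsv : ∀ v, dF 0 (s v) = γ 0 v - v := by
        intro v
        have := LinearMap.congr_fun hs v
        simpa using this
      constructor
      · exact ⟨s, fun w => hsv (dF 0 w)⟩
      · intro v
        rw [← hsv v]
        exact hF.2.2.2 0 ⟨s v, rfl⟩
  | succ i ih =>
      obtain ⟨⟨s, hs⟩, _⟩ := ih
      set t : (Fin (bF (i+1)) → Q) →ₗ[Q] (Fin (bF (i+1)) → Q) :=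
        γ (i+1) - LinearMap.id - s ∘ₗ dF i with ht
      have hrange : ∀ v, t v ∈ LinearMap.range (dF (i+1)) := by
        intro v
        have hdt : dF i (t v) = 0 := by
          rw [ht]
          simp only [LinearMap.sub_apply, LinearMap.id_apply, LinearMap.comp_apply, map_sub]
          rw [show dF i (γ (i+1) v) = γ i (dF i v) from LinearMap.congr_fun (hγ i) v, hs v]
          abel
        exact (hF.2.2.1 i _).mp hdt
      obtain ⟨s', hs'⟩ := TorAux.lift_of_range t (dF (i+1)) hrange
      have hsv : ∀ v, dF (i+1) (s' v) = γ (i+1) v - v - s (dF i v) := by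
        intro v
        have := LinearMap.congr_fun hs' v
        simpa [ht] using this
      constructor
      · refine ⟨s', fun w => ?_⟩
        rw [hsv (dF (i+1) w)]
        have hz : dF i (dF (i+1) w) = 0 := (hF.2.2.1 i _).mpr ⟨w, rfl⟩
        rw [hz, map_zero, sub_zero]
      · intro v
        have hdec : γ (i+1) v - v = dF (i+1) (s' v) + s (dF i v) := by
          rw [hsv v]; abel
        rw [hdec]
        refine Submodule.add_mem _ (hF.2.2.2 (i+1) ⟨s' v, rfl⟩) ?_
        exact TorAux.mem_smul_top_of_mem s m (hF.2.2.2 i ⟨v, rfl⟩)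

end Homotopy

section Transfer

open IsLocalRing

variable {Q : Type u} [CommRing Q] [IsLocalRing Q]
  {M : Type u} [AddCommGroup M] [Module Q M]
  {bF : ℕ → ℕ} {dF : ∀ i : ℕ, ((Fin (bF (i+1)) → Q) →ₗ[Q] (Fin (bF i) → Q))}
  {εF : (Fin (bF 0) → Q) →ₗ[Q] M}

lemma TorAux.mem_of_eps_mem (hF : IsMinFreeRes Q M bF dF εF) (v : Fin (bF 0) → Q)
    (hv : εF v ∈ maximalIdeal Q • (⊤ : Submodule Q M)) :
    v ∈ maximalIdeal Q • (⊤ : Submodule Q (Fin (bF 0) → Q)) := by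
  have hmap : maximalIdeal Q • (⊤ : Submodule Q M) =
      (maximalIdeal Q • (⊤ : Submodule Q (Fin (bF 0) → Q))).map εF := by
    rw [Submodule.map_smul'', Submodule.map_top, LinearMap.range_eq_top.mpr hF.1]
  rw [hmap] at hv
  obtain ⟨w, hw, hwv⟩ := hv
  have hz : εF (v - w) = 0 := by rw [map_sub, hwv, sub_self]
  have hr : v - w ∈ LinearMap.range (dF 0) := by
    obtain ⟨u, hu⟩ := (hF.2.1 _).mp hz
    exact ⟨u, hu⟩
  have : v = (v - w) + w := by abel
  rw [this]
  exact Submodule.add_mem _ (hF.2.2.2 0 hr) hw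

/-- Transfer of the linearity property from one minimal resolution to another. -/
lemma TorAux.linear_transfer (hM : HasLinearRes Q M) (hF : IsMinFreeRes Q M bF dF εF) :
    ∀ (i : ℕ) (v : Fin (bF (i+1)) → Q),
      dF i v ∈ ((maximalIdeal Q)^2 • (⊤ : Submodule Q (Fin (bF i) → Q))) →
        v ∈ maximalIdeal Q • (⊤ : Submodule Q (Fin (bF (i+1)) → Q)) := by
  obtain ⟨b', d', ε', hmin', hlin'⟩ := hM
  set α := TorAux.chainAux hF hmin' with hα
  set β := TorAux.chainAux hmin' hF with hβ
  have hγ0 : εF ∘ₗ ((β 0).1 ∘ₗ (α 0).1) = εF := by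
    rw [← LinearMap.comp_assoc, TorAux.chainAux_zero_spec hmin' hF,
      TorAux.chainAux_zero_spec hF hmin']
  have hγ : ∀ i, dF i ∘ₗ ((β (i+1)).1 ∘ₗ (α (i+1)).1) = ((β i).1 ∘ₗ (α i).1) ∘ₗ dF i := by
    intro i
    rw [← LinearMap.comp_assoc, TorAux.chainAux_succ_spec hmin' hF i, LinearMap.comp_assoc,
      TorAux.chainAux_succ_spec hF hmin' i, ← LinearMap.comp_assoc]
  have hC := TorAux.sub_id_mem hF (fun i => (β i).1 ∘ₗ (α i).1) hγ0 hγ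
  intro i v hv
  have h1 : (α i).1 (dF i v) ∈ (maximalIdeal Q)^2 • (⊤ : Submodule Q (Fin (b' i) → Q)) :=
    TorAux.mem_smul_top_of_mem _ _ hv
  have h2 : d' i ((α (i+1)).1 v) = (α i).1 (dF i v) :=
    LinearMap.congr_fun (TorAux.chainAux_succ_spec hF hmin' i) v
  have h3 : (α (i+1)).1 v ∈ maximalIdeal Q • (⊤ : Submodule Q (Fin (b' (i+1)) → Q)) :=
    hlin' i _ (by rw [h2]; exact h1)
  have h4 : (β (i+1)).1 ((α (i+1)).1 v) ∈
      maximalIdeal Q • (⊤ : Submodule Q (Fin (bF (i+1)) → Q)) :=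
    TorAux.mem_smul_top_of_mem _ _ h3
  have h5 := hC (i+1) v
  have h6 : ((β (i+1)).1 ∘ₗ (α (i+1)).1) v = (β (i+1)).1 ((α (i+1)).1 v) := rfl
  have hvv : v = (β (i+1)).1 ((α (i+1)).1 v) -
      (((β (i+1)).1 ∘ₗ (α (i+1)).1) v - v) := by rw [h6]; abel
  rw [hvv]
  exact Submodule.sub_mem _ h4 h5

end Transfer


/-- Let `π : Q → R` be a surjection of local rings with `ker π ⊆ n²`, let `M` be a
`Q`-module with a linear resolution, `N` an `R`-module, and `φ : M → N` a `Q`-linear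
(i.e. `π`-semilinear) map inducing an injection `M/nM → N/mN`.  Then the induced maps
`Tor_i^Q(M,k) → Tor_i^R(N,k)` are injective for all `i`.  Here `Tor` is computed by
minimal free resolutions `F` of `M` and `G` of `N`, so that `Tor_i^Q(M,k) = F_i/nF_i`
and `Tor_i^R(N,k) = G_i/mG_i`, and the map is the one induced by any chain map `Φ`
lifting `φ`. -/
theorem tor_maps_injective_of_linear_resolution
    (Q : Type u) [CommRing Q] [IsLocalRing Q] [IsNoetherianRing Q]
    (R : Type u) [CommRing R] [IsLocalRing R] [IsNoetherianRing R]
    (π : Q →+* R) (hsurj : Function.Surjective π)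
    (hker : RingHom.ker π ≤ (maximalIdeal Q) ^ 2)
    (M : Type u) [AddCommGroup M] [Module Q M] [Module.Finite Q M]
    (N : Type u) [AddCommGroup N] [Module R N] [Module.Finite R N]
    (hM : HasLinearRes Q M)
    (φ : M →ₛₗ[π] N)
    (hφ : ∀ x : M, φ x ∈ (maximalIdeal R • (⊤ : Submodule R N)) →
      x ∈ (maximalIdeal Q • (⊤ : Submodule Q M)))
    -- minimal free resolutions of `M` over `Q` and of `N` over `R`
    (bF : ℕ → ℕ) (dF : ∀ i : ℕ, ((Fin (bF (i+1)) → Q) →ₗ[Q] (Fin (bF i) → Q)))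
    (εF : (Fin (bF 0) → Q) →ₗ[Q] M) (hF : IsMinFreeRes Q M bF dF εF)
    (bG : ℕ → ℕ) (dG : ∀ i : ℕ, ((Fin (bG (i+1)) → R) →ₗ[R] (Fin (bG i) → R)))
    (εG : (Fin (bG 0) → R) →ₗ[R] N) (hG : IsMinFreeRes R N bG dG εG)
    -- a chain map `Φ` lifting `φ`
    (Φ : ∀ i : ℕ, (Fin (bF i) → Q) →ₛₗ[π] (Fin (bG i) → R))
    (hΦ0 : ∀ v, εG (Φ 0 v) = φ (εF v))
    (hΦ : ∀ (i : ℕ) (v : Fin (bF (i+1)) → Q), Φ i (dF i v) = dG i (Φ (i+1) v)) :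
    ∀ (i : ℕ) (v : Fin (bF i) → Q),
      Φ i v ∈ (maximalIdeal R • (⊤ : Submodule R (Fin (bG i) → R))) →
        v ∈ (maximalIdeal Q • (⊤ : Submodule Q (Fin (bF i) → Q))) := by
  intro i
  induction i with
  | zero =>
      intro v hv
      have h1 : εG (Φ 0 v) ∈ maximalIdeal R • (⊤ : Submodule R N) :=
        TorAux.mem_smul_top_of_mem εG _ hv
      rw [hΦ0 v] at h1
      exact TorAux.mem_of_eps_mem hF v (hφ (εF v) h1)
  | succ i ih =>
      intro v hv
      -- (a) `Φ i (dF i v) ∈ m² • ⊤`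
      have ha : Φ i (dF i v) ∈
          (maximalIdeal R)^2 • (⊤ : Submodule R (Fin (bG i) → R)) := by
        rw [hΦ i v, TorAux.sq_smul_top]
        have h1 : dG i (Φ (i+1) v) ∈
            (maximalIdeal R • (⊤ : Submodule R (Fin (bG (i+1)) → R))).map (dG i) :=
          Submodule.mem_map_of_mem hv
        rw [Submodule.map_smul''] at h1
        refine Submodule.smul_mono le_rfl ?_ h1
        rw [Submodule.map_top]
        exact hG.2.2.2 i
      -- (b) linearize `Φ i` over `R`
      set f : (Fin (bF i) → R) →ₗ[R] (Fin (bG i) → R) :=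
        ∑ j : Fin (bF i), (LinearMap.toSpanSingleton R (Fin (bG i) → R)
          (Φ i (Pi.single j (1 : Q)))) ∘ₗ (LinearMap.proj j) with hfdef
      have hfapp : ∀ x : Fin (bF i) → R, f x = ∑ j, x j • Φ i (Pi.single j (1 : Q)) := by
        intro x
        rw [hfdef]
        simp [LinearMap.toSpanSingleton_apply]
      have hfΦ : ∀ w : Fin (bF i) → Q, f (fun j => π (w j)) = Φ i w := by
        intro w
        rw [hfapp]
        have hw : Φ i w = Φ i (∑ j, Pi.single j (w j)) := by
          rw [Finset.univ_sum_single]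
        rw [hw, map_sum]
        refine Finset.sum_congr rfl fun j _ => ?_
        have hsingle : (Pi.single j (w j) : Fin (bF i) → Q) = w j • (Pi.single j (1 : Q) : Fin (bF i) → Q) := by
          rw [← Pi.single_smul, smul_eq_mul, mul_one]
        rw [hsingle, LinearMap.map_smulₛₗ]
      -- (b') `f` is injective modulo `m` by the inductive hypothesis
      have hfinj : ∀ x, f x ∈ maximalIdeal R • (⊤ : Submodule R (Fin (bG i) → R)) →
          x ∈ maximalIdeal R • (⊤ : Submodule R (Fin (bF i) → R)) := by
        intro x hx
        choose w hw using fun j => hsurj (x j)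
        have hxw : x = fun j => π (w j) := funext fun j => (hw j).symm
        rw [hxw] at hx ⊢
        rw [hfΦ w] at hx
        have hwm := ih w hx
        rw [TorAux.mem_smul_top_pi]
        intro j
        exact (TorAux.pi_mem_max π hsurj hker (w j)).mpr
          ((TorAux.mem_smul_top_pi _ _).mp hwm j)
      -- (c) splitting: upgrade to `m²`
      have hc : f (fun j => π (dF i v j)) ∈
          (maximalIdeal R)^2 • (⊤ : Submodule R (Fin (bG i) → R)) := by
        rw [hfΦ]; exact ha
      have hd := TorAux.split_mem f hfinj ((maximalIdeal R)^2) _ hc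
      -- transfer back to `Q` componentwise
      have he : dF i v ∈ (maximalIdeal Q)^2 • (⊤ : Submodule Q (Fin (bF i) → Q)) := by
        rw [TorAux.mem_smul_top_pi]
        intro j
        exact TorAux.pi_mem_sq π hsurj hker _ ((TorAux.mem_smul_top_pi _ _).mp hd j)
      -- (d) use the linear resolution of `M`
      exact TorAux.linear_transfer hM hF i v he
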